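/- Let ν₀ > 0 and suppose G < 0 (i.e., assume sup over the leaf of the divergence expression is negative). If H : ℝ → ℝ is differentiable with n·ν₀·H(s)² + n·H'(s) < 0 for all s (where n ≥ 1/ν₀ is a positive integer), then after choosing orientation so that H ≤ 0 on some ray (a,∞), one derives a contradiction; hence no such H exists with H(s) ≤ 0 for all s > a. Conclude: the invariant G_L^ξ := sup_L {div_L(A(ξ^⊤) − Hξ^⊤) + Ric(ξ^⊤, N)} is nonnegative. -/

import Mathlib

/-- core of the nonnegativity of the invariant G_L^ξ in
Theorem C: there is no differentiable function H : (a,∞) → ℝ with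
H(s) < 0 and H'(s) < -ν₀·H(s)² for all s > a, where ν₀ > 0.  Consequently,
along a complete integral curve of ξ^⊤ the mean curvature cannot satisfy
ν₀·H² + H' < 0 with H eventually negative, which forces
G_L^ξ = sup_L {div_L(A(ξ^⊤) − Hξ^⊤) + Ric(ξ^⊤, N)} ≥ 0. -/
theorem no_strict_riccati_negative_solution (a ν₀ : ℝ) (hν₀ : 0 < ν₀)
    (n : ℕ) (hn : (1 : ℝ) / ν₀ ≤ n) (H : ℝ → ℝ)
    (hdiff : ∀ s, a < s → DifferentiableAt ℝ H s)
    (hineq : ∀ s, a < s → (n : ℝ) * ν₀ * (H s) ^ 2 + (n : ℝ) * deriv H s < 0)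
    (hneg : ∀ s, a < s → H s ≤ 0) :
    False := by
  have hnpos : (0 : ℝ) < n := lt_of_lt_of_le (by positivity) hn
  -- From the inequality: deriv H s < -ν₀ * H s ^ 2 for s > a.
  have hder : ∀ s, a < s → deriv H s < -ν₀ * H s ^ 2 := by
    intro s hs
    have h := hineq s hs
    nlinarith [sq_nonneg (H s)]
  have hderneg : ∀ s, a < s → deriv H s < 0 := by
    intro s hs
    have := hder s hs
    nlinarith [sq_nonneg (H s)]
  -- H is strictly decreasing on (a, ∞)
  have hanti : StrictAntiOn H (Set.Ioi a) := by
    apply strictAntiOn_of_deriv_neg (convex_Ioi a)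
    · exact fun s hs => (hdiff s hs).continuousAt.continuousWithinAt
    · intro s hs
      rw [interior_Ioi] at hs
      exact hderneg s hs
  set b : ℝ := a + 1 with hb
  have hab : a < b := by simp [hb]
  -- H is strictly negative beyond b
  have hHneg : ∀ s, b < s → H s < 0 := by
    intro s hs
    have h1 : H s < H b := hanti (Set.mem_Ioi.mpr hab) (Set.mem_Ioi.mpr (hab.trans hs)) hs
    exact lt_of_lt_of_le h1 (hneg b hab)
  -- f := -1/H is positive on (b, ∞) with derivative < -ν₀
  set f : ℝ → ℝ := fun s => -(H s)⁻¹ with hf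
  have hfpos : ∀ s, b < s → 0 < f s := by
    intro s hs
    have h := hHneg s hs
    simp only [hf]
    have : (H s)⁻¹ < 0 := inv_neg''.mpr h
    linarith
  have hfderiv : ∀ s, b < s → HasDerivAt f (deriv H s / H s ^ 2) s := by
    intro s hs
    have hne : H s ≠ 0 := (hHneg s hs).ne
    have h1 : HasDerivAt H (deriv H s) s :=
      (hdiff s (hab.trans hs)).hasDerivAt
    have h2 := (h1.inv hne).neg
    exact (by simpa [neg_div, neg_neg] using h2 : HasDerivAt (-H⁻¹) (deriv H s / H s ^ 2) s)
  have hfderlt : ∀ s, b < s → deriv f s < -ν₀ := by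
    intro s hs
    rw [(hfderiv s hs).deriv]
    have hsq : 0 < H s ^ 2 := by have := hHneg s hs; nlinarith
    rw [div_lt_iff₀ hsq]
    have := hder s (hab.trans hs)
    nlinarith
  -- Apply MVT on [s₁, t] with t large
  set s₁ : ℝ := b + 1 with hs₁
  have hbs₁ : b < s₁ := by simp [hs₁]
  set t : ℝ := s₁ + f s₁ / ν₀ + 1 with ht
  have hfs₁ : 0 < f s₁ := hfpos s₁ hbs₁
  have hst : s₁ < t := by
    have : 0 < f s₁ / ν₀ := by positivity
    simp only [ht]; linarith
  have hbt : ∀ x, x ∈ Set.Ioo s₁ t → b < x := fun x hx => hbs₁.trans hx.1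
  have hcont : ContinuousOn f (Set.Icc s₁ t) := by
    intro x hx
    have hbx : b < x := lt_of_lt_of_le hbs₁ hx.1
    exact (hfderiv x hbx).continuousAt.continuousWithinAt
  have hdiff' : DifferentiableOn ℝ f (Set.Ioo s₁ t) := by
    intro x hx
    exact ((hfderiv x (hbt x hx)).differentiableAt).differentiableWithinAt
  obtain ⟨c, hc, hceq⟩ := exists_deriv_eq_slope f hst hcont hdiff'
  have hclt : deriv f c < -ν₀ := hfderlt c (hbt c hc)
  have hslope : (f t - f s₁) / (t - s₁) < -ν₀ := hceq ▸ hclt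
  have htpos : 0 < t - s₁ := by linarith
  rw [div_lt_iff₀ htpos] at hslope
  have hft : 0 < f t := hfpos t (hbs₁.trans hst)
  have hts : t - s₁ = f s₁ / ν₀ + 1 := by simp [ht]; ring
  rw [hts] at hslope
  have key : -ν₀ * (f s₁ / ν₀ + 1) = -f s₁ - ν₀ := by field_simp; ring
  rw [key] at hslope
  linarith
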